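/- Let P be symmetric positive definite and Q + Q^T = diag(-1,0,...,0,1). Consider the SAT-modified system u'(t) = -P⁻¹ Q u(t) - θ P⁻¹ (u_0(t) - g) e_0 with g = u_{n-1}(t) (periodic self-coupling of a single block, K=1). Then E(t) = u(t)^T P u(t) satisfies E'(t) = -2θ·(u_0(t) - u_{n-1}(t))·u_0(t) + u_0(t)^2 - u_{n-1}(t)^2; in particular for θ = 1, E'(t) = -(u_0(t) - u_{n-1}(t))^2 ≤ 0. -/

import Mathlib

open Matrix

theorem sbp_sat_energy_rate_periodic (n : ℕ)
    (P Q : Matrix (Fin (n + 2)) (Fin (n + 2)) ℝ) (hP : P.PosDef)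
    (hQ : Q + Qᵀ = Matrix.diagonal (fun i =>
      if i = 0 then (-1 : ℝ) else if i = Fin.last (n + 1) then 1 else 0))
    (θ : ℝ) (u : ℝ → (Fin (n + 2) → ℝ))
    (hu : ∀ t, HasDerivAt u
      (-(P⁻¹ * Q).mulVec (u t)
        - θ • P⁻¹.mulVec ((u t 0 - u t (Fin.last (n + 1))) • (Pi.single 0 1 : Fin (n + 2) → ℝ))) t) :
    ∀ t, HasDerivAt (fun s => u s ⬝ᵥ P.mulVec (u s))
        (-2 * θ * (u t 0 - u t (Fin.last (n + 1))) * u t 0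
          + u t 0 ^ 2 - u t (Fin.last (n + 1)) ^ 2) t
      ∧ (θ = 1 → HasDerivAt (fun s => u s ⬝ᵥ P.mulVec (u s))
          (-(u t 0 - u t (Fin.last (n + 1))) ^ 2) t
        ∧ -(u t 0 - u t (Fin.last (n + 1))) ^ 2 ≤ 0) := by
  intro t
  have hPdet : IsUnit P.det := isUnit_iff_ne_zero.mpr (ne_of_gt hP.det_pos)
  have hPsymm : Pᵀ = P := hP.1
  set v : Fin (n + 2) → ℝ :=
    -(P⁻¹ * Q).mulVec (u t)
      - θ • P⁻¹.mulVec ((u t 0 - u t (Fin.last (n + 1))) • (Pi.single 0 1 : Fin (n + 2) → ℝ))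
    with hv
  have hcomp : ∀ i, HasDerivAt (fun s => u s i) (v i) t :=
    fun i => (hasDerivAt_pi.mp (hu t)) i
  -- Derivative of the energy
  have hE : HasDerivAt (fun s => u s ⬝ᵥ P.mulVec (u s))
      (v ⬝ᵥ P.mulVec (u t) + u t ⬝ᵥ P.mulVec v) t := by
    have : HasDerivAt (fun s => ∑ i, u s i * ∑ j, P i j * u s j)
        (∑ i, (v i * ∑ j, P i j * u t j + u t i * ∑ j, P i j * v j)) t := by
      apply HasDerivAt.fun_sum
      intro i _
      exact (hcomp i).mul (HasDerivAt.fun_sum fun j _ => (hcomp j).const_mul (P i j))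
    convert this using 2
    all_goals simp [dotProduct, Matrix.mulVec, Finset.mul_sum, Finset.sum_add_distrib]
  -- compute P.mulVec v
  have hPv : P.mulVec v =
      -(Q.mulVec (u t)) - θ • ((u t 0 - u t (Fin.last (n + 1))) • (Pi.single 0 1 : Fin (n + 2) → ℝ)) := by
    have h1 : P * P⁻¹ = 1 := Matrix.mul_nonsing_inv P hPdet
    rw [hv]
    simp only [Matrix.mulVec_sub, Matrix.mulVec_neg, Matrix.mulVec_smul,
      Matrix.mulVec_mulVec, ← Matrix.mul_assoc, h1, Matrix.one_mul, Matrix.one_mulVec]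
  -- symmetry: v ⬝ᵥ P u = u ⬝ᵥ P v
  have hsym : v ⬝ᵥ P.mulVec (u t) = u t ⬝ᵥ P.mulVec v := by
    rw [Matrix.dotProduct_mulVec, ← Matrix.mulVec_transpose, hPsymm, dotProduct_comm]
  -- boundary quadratic form
  have hB : u t ⬝ᵥ (Q + Qᵀ).mulVec (u t) = -(u t 0)^2 + (u t (Fin.last (n + 1)))^2 := by
    rw [hQ]
    have h0 : (0 : Fin (n + 2)) ≠ Fin.last (n + 1) := by
      simp [Fin.ext_iff, Fin.last]
    have : ∀ i, u t i * ((Matrix.diagonal (fun i =>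
        if i = 0 then (-1 : ℝ) else if i = Fin.last (n + 1) then 1 else 0)).mulVec (u t)) i
        = (if i = 0 then -(u t 0)^2 else 0)
          + (if i = Fin.last (n + 1) then (u t (Fin.last (n + 1)))^2 else 0) := by
      intro i
      rw [Matrix.mulVec_diagonal]
      by_cases h1 : i = 0
      · subst h1; simp [h0]; ring
      · by_cases h2 : i = Fin.last (n + 1)
        · subst h2; simp [h1, Ne.symm h0]; ring
        · simp [h1, h2]
    rw [show u t ⬝ᵥ _ = ∑ i, u t i * _ from rfl]
    simp only [this, Finset.sum_add_distrib, Finset.sum_ite_eq', Finset.mem_univ, if_true]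
  have hQQ : u t ⬝ᵥ Qᵀ.mulVec (u t) = u t ⬝ᵥ Q.mulVec (u t) := by
    rw [Matrix.dotProduct_mulVec, Matrix.vecMul_transpose, dotProduct_comm]
  have hQu : 2 * (u t ⬝ᵥ Q.mulVec (u t)) = -(u t 0)^2 + (u t (Fin.last (n + 1)))^2 := by
    rw [← hB, Matrix.add_mulVec, dotProduct_add, hQQ]; ring
  have hsingle : u t ⬝ᵥ (Pi.single 0 1 : Fin (n + 2) → ℝ) = u t 0 := by
    simp [dotProduct_single]
  have hval : v ⬝ᵥ P.mulVec (u t) + u t ⬝ᵥ P.mulVec v =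
      -2 * θ * (u t 0 - u t (Fin.last (n + 1))) * u t 0
        + u t 0 ^ 2 - u t (Fin.last (n + 1)) ^ 2 := by
    rw [hsym, hPv]
    simp only [dotProduct_sub, dotProduct_neg, dotProduct_smul,
      smul_eq_mul, hsingle]
    nlinarith [hQu]
  have hmain : HasDerivAt (fun s => u s ⬝ᵥ P.mulVec (u s))
      (-2 * θ * (u t 0 - u t (Fin.last (n + 1))) * u t 0
        + u t 0 ^ 2 - u t (Fin.last (n + 1)) ^ 2) t := hval ▸ hE
  refine ⟨hmain, fun hθ => ⟨?_, neg_nonpos.mpr (sq_nonneg _)⟩⟩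
  have : -2 * θ * (u t 0 - u t (Fin.last (n + 1))) * u t 0
      + u t 0 ^ 2 - u t (Fin.last (n + 1)) ^ 2
      = -(u t 0 - u t (Fin.last (n + 1))) ^ 2 := by subst hθ; ring
  exact this ▸ hmain
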